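/- arXiv:1710.07255 — 5 statements merged into one kernel-verified Lean document; each statement's English description precedes it below -/
import Mathlib

section
/- Let k ≥ 3, m ≥ 1, let H be a subgraph of the torus C_k^m that does not wrap, and set r = |V(H)|. If there exists a finite multiset of restricted copies of H in C_k^m that is a (1, 0, ..., 0, -1)-layered cover of C_k^m, then for every j ≥ m there exists a finite multiset of restricted copies of H in C_k^j that is a (1, 1, ..., 1, 1-k)-layered cover of C_k^j (every vertex with first coordinate different from k-1 is covered 1 mod r times, and every vertex with first coordinate k-1 is covered 1-k mod r times). -/
/-- The torus `C_k^n`. -/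
def torus (k n : ℕ) : SimpleGraph (Fin n → ZMod k) :=
  SimpleGraph.fromRel fun u v => ∃ i, u i - v i = 1 ∧ ∀ j, j ≠ i → u j = v j

/-- A set of vertices of `C_k^m` does not wrap: every coordinate of every vertex lies in
`{0, ..., k-2}` (identifying `ZMod k` with `{0, ..., k-1}`). -/
def DoesNotWrap (k m : ℕ) (A : Set (Fin m → ZMod k)) : Prop :=
  ∀ v ∈ A, ∀ i : Fin m, (v i).val ≤ k - 2

/-- The map `C_k^m → C_k^n` appending `n - m` zero coordinates. -/
def extendZeroMap (k m n : ℕ) (v : Fin m → ZMod k) : Fin n → ZMod k :=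
  fun ℓ => if h : (ℓ : ℕ) < m then v ⟨ℓ, h⟩ else 0

/-- The bend map `S^{n,s}_{i,j} : C_k^m → C_k^n` (with `i : Fin m` zero-indexed, so that
`i` here corresponds to coordinate `i+1 ∈ {1,...,m}` of the paper; `j ∈ {0,...,k-2}`;
the paper's coordinate `m+s` is the zero-indexed coordinate `m+s-1`).  A vertex `v` with
`v i < j` is extended by zeros; a vertex with `v i = j - 1 + t`, `t ≥ 1`, has its `i`-th
coordinate replaced by `j - 1` and its appended coordinate `m + s - 1` set to `t`. -/
def bendMap (k m n : ℕ) (i : Fin m) (j s : ℕ) (v : Fin m → ZMod k) : Fin n → ZMod k :=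
  fun ℓ =>
    if h : (ℓ : ℕ) < m then
      if (ℓ : ℕ) = (i : ℕ) then
        (if (v i).val < j then v i else (j : ZMod k) - 1)
      else v ⟨ℓ, h⟩
    else
      if (ℓ : ℕ) = m + s - 1 then
        (if (v i).val < j then 0 else v i - ((j : ZMod k) - 1))
      else 0

/-- `B ⊆ C_k^n` is a restricted copy of the set `A ⊆ C_k^m`: it is obtained from
`A × {0}^{n-m}` by a finite composition of translates and bend maps. -/
inductive IsRestrictedCopy (k : ℕ) {m : ℕ} (A : Set (Fin m → ZMod k)) :
    {n : ℕ} → Set (Fin n → ZMod k) → Prop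
  | extend {n : ℕ} (h : m ≤ n) : IsRestrictedCopy k A (extendZeroMap k m n '' A)
  | translate {n : ℕ} {B : Set (Fin n → ZMod k)} (w : Fin n → ZMod k)
      (hB : IsRestrictedCopy k A B) : IsRestrictedCopy k A ((· + w) '' B)
  | bend {n n' : ℕ} {B : Set (Fin n → ZMod k)} (h : n ≤ n') (i : Fin n) (j s : ℕ)
      (hj : j ≤ k - 2) (hs : 1 ≤ s) (hs' : s ≤ n' - n)
      (hB : IsRestrictedCopy k A B) : IsRestrictedCopy k A (bendMap k n n' i j s '' B)

open scoped Classical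

/- ### Auxiliary lemmas -/

lemma extendZeroMap_comp (k m0 m j : ℕ) (hm : m0 ≤ m) (v : Fin m0 → ZMod k) :
    extendZeroMap k m j (extendZeroMap k m0 m v) = extendZeroMap k m0 j v := by
  funext ℓ
  simp only [extendZeroMap]
  split_ifs <;> first | rfl | omega

lemma extendZeroMap_add (k m j : ℕ) (v w : Fin m → ZMod k) :
    extendZeroMap k m j (v + w) = extendZeroMap k m j v + extendZeroMap k m j w := by
  funext ℓ
  simp only [extendZeroMap, Pi.add_apply]
  split_ifs <;> simp

lemma extendZeroMap_comp_bendMap (k n m j : ℕ)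
    (i : Fin n) (j0 s : ℕ) (hs : 1 ≤ s) (hs' : s ≤ m - n) (v : Fin n → ZMod k) :
    extendZeroMap k m j (bendMap k n m i j0 s v) = bendMap k n j i j0 s v := by
  funext ℓ
  simp only [extendZeroMap, bendMap]
  split_ifs <;> first | rfl | omega

lemma IsRestrictedCopy.extendZero {k m : ℕ} {A : Set (Fin m → ZMod k)}
    {n : ℕ} {B : Set (Fin n → ZMod k)} (hB : IsRestrictedCopy k A B)
    {j : ℕ} (hj : n ≤ j) : IsRestrictedCopy k A (extendZeroMap k n j '' B) := by
  induction hB generalizing j with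
  | @extend n h =>
      rw [← Set.image_comp]
      have : (extendZeroMap k n j ∘ extendZeroMap k m n) = extendZeroMap k m j := by
        funext v; exact extendZeroMap_comp k m n j h v
      rw [this]
      exact .extend (le_trans h hj)
  | @translate n B w hB ih =>
      rw [← Set.image_comp]
      have : (extendZeroMap k n j ∘ (· + w)) =
          ((· + extendZeroMap k n j w) ∘ extendZeroMap k n j) := by
        funext v; exact extendZeroMap_add k n j v w
      rw [this, Set.image_comp]
      exact .translate _ (ih hj)
  | @bend n n' B h i j0 s hj0 hs hs' hB ih =>
      rw [← Set.image_comp]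
      have : (extendZeroMap k n' j ∘ bendMap k n n' i j0 s) = bendMap k n j i j0 s := by
        funext v; exact extendZeroMap_comp_bendMap k n n' j i j0 s hs hs' v
      rw [this]
      exact .bend (le_trans h hj) i j0 s hj0 hs (by omega) hB

lemma countP_finsetSum {α ι : Type*} (s : Finset ι) (f : ι → Multiset α)
    (p : α → Prop) [DecidablePred p] :
    Multiset.countP p (∑ i ∈ s, f i) = ∑ i ∈ s, Multiset.countP p (f i) := by
  induction s using Finset.cons_induction with
  | empty => simp
  | cons a t h ih => rw [Finset.sum_cons, Finset.sum_cons, Multiset.countP_add, ih]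

/-- The translation vector used in the main construction. -/
def lcTau (k m j : ℕ) (hmj : m ≤ j) (p : ZMod k × (Fin (j - m) → ZMod k)) :
    Fin j → ZMod k := fun ℓ =>
  if h : (ℓ : ℕ) < m then (if (ℓ : ℕ) = 0 then p.1 else 0)
  else p.2 ⟨(ℓ : ℕ) - m, by omega⟩

/-- The first `m` coordinates of `v`, shifted by `c` in coordinate `0`. -/
def lcX (k m j : ℕ) (hmj : m ≤ j) (v : Fin j → ZMod k) (c : ZMod k) :
    Fin m → ZMod k := fun i =>
  v (Fin.castLE hmj i) - (if (i : ℕ) = 0 then c else 0)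

/-- The last `j - m` coordinates of `v`. -/
def lcVt (k m j : ℕ) (hmj : m ≤ j) (v : Fin j → ZMod k) :
    Fin (j - m) → ZMod k := fun t => v ⟨m + t, by omega⟩

lemma lc_mem_iff (k m j : ℕ) (hmj : m ≤ j) (v : Fin j → ZMod k)
    (p : ZMod k × (Fin (j - m) → ZMod k)) (B0 : Set (Fin m → ZMod k)) :
    v ∈ (· + lcTau k m j hmj p) '' (extendZeroMap k m j '' B0) ↔
      (p.2 = lcVt k m j hmj v ∧ lcX k m j hmj v p.1 ∈ B0) := by
  constructor
  · rintro ⟨a, ⟨b, hb, rfl⟩, hEq⟩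
    have hEq' : ∀ ℓ : Fin j, extendZeroMap k m j b ℓ + lcTau k m j hmj p ℓ = v ℓ :=
      fun ℓ => congrFun hEq ℓ
    constructor
    · funext t
      have h1 := hEq' ⟨m + t, by omega⟩
      simp only [extendZeroMap, lcTau, lcVt] at h1 ⊢
      rw [dif_neg (by omega), dif_neg (by omega)] at h1
      simpa [Nat.add_sub_cancel_left] using h1
    · have hbx : lcX k m j hmj v p.1 = b := by
        funext i
        have h1 := hEq' (Fin.castLE hmj i)
        simp only [extendZeroMap, lcTau, lcX, Fin.coe_castLE] at h1 ⊢
        rw [dif_pos i.isLt, dif_pos i.isLt] at h1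
        rw [← h1]
        simp
      rwa [hbx]
  · rintro ⟨hp2, hxB⟩
    refine ⟨extendZeroMap k m j (lcX k m j hmj v p.1), ⟨_, hxB, rfl⟩, ?_⟩
    funext ℓ
    by_cases hℓ : (ℓ : ℕ) < m
    · simp only [Pi.add_apply, extendZeroMap, lcTau, lcX, dif_pos hℓ]
      have : Fin.castLE hmj (⟨(ℓ : ℕ), hℓ⟩ : Fin m) = ℓ := by
        apply Fin.ext; simp
      rw [this]
      simp [sub_add_cancel]
    · simp only [Pi.add_apply, extendZeroMap, lcTau, dif_neg hℓ, hp2, lcVt, zero_add]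
      congr 1
      apply Fin.ext
      simp
      omega

theorem layered_cover_all_levels (k m : ℕ) (hk : 3 ≤ k) (hm : 1 ≤ m)
    (H : (torus k m).Subgraph) (hw : DoesNotWrap k m H.verts)
    -- there is a `(1, 0, ..., 0, -1)`-layered cover of `C_k^m`, with `r = |V(H)|`
    (hZ : ∃ Z : Multiset (Set (Fin m → ZMod k)),
      (∀ B ∈ Z, IsRestrictedCopy k H.verts B) ∧
      ∀ v : Fin m → ZMod k,
        (Multiset.countP (fun B => v ∈ B) Z : ℤ) ≡
          (if v ⟨0, hm⟩ = 0 then 1 else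
            if v ⟨0, hm⟩ = ((k - 1 : ℕ) : ZMod k) then -1 else 0)
          [ZMOD (H.verts.ncard : ℤ)]) :
    -- for every `j ≥ m` there is a `(1, 1, ..., 1, 1-k)`-layered cover of `C_k^j`
    ∀ j : ℕ, ∀ hj : m ≤ j, ∃ Y : Multiset (Set (Fin j → ZMod k)),
      (∀ B ∈ Y, IsRestrictedCopy k H.verts B) ∧
      ∀ v : Fin j → ZMod k,
        (Multiset.countP (fun B => v ∈ B) Y : ℤ) ≡
          (if v ⟨0, Nat.lt_of_lt_of_le hm hj⟩ = ((k - 1 : ℕ) : ZMod k)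
            then 1 - (k : ℤ) else 1)
          [ZMOD (H.verts.ncard : ℤ)] := by
  obtain ⟨Z, hZc, hZv⟩ := hZ
  intro j hj
  haveI : NeZero k := ⟨by omega⟩
  haveI : Fact (1 < k) := ⟨by omega⟩
  set r : ℕ := H.verts.ncard with hr
  set wt : ZMod k → ℕ := fun c => k - 1 - c.val with hwt
  set Y : Multiset (Set (Fin j → ZMod k)) :=
    ∑ p : ZMod k × (Fin (j - m) → ZMod k),
      wt p.1 • Z.map (fun B => (· + lcTau k m j hj p) '' (extendZeroMap k m j '' B)) with hY
  refine ⟨Y, ?_, ?_⟩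
  · intro B hB
    rw [hY, Multiset.mem_sum] at hB
    obtain ⟨p, -, hB⟩ := hB
    rw [Multiset.mem_nsmul] at hB
    obtain ⟨-, hB⟩ := hB
    rw [Multiset.mem_map] at hB
    obtain ⟨B0, hB0, rfl⟩ := hB
    exact .translate _ ((hZc B0 hB0).extendZero hj)
  · intro v
    rw [← ZMod.intCast_eq_intCast_iff]
    set v0 : ZMod k := v ⟨0, Nat.lt_of_lt_of_le hm hj⟩ with hv0
    -- the count as a natural number
    have hcount : Multiset.countP (fun B => v ∈ B) Y =
        ∑ p : ZMod k × (Fin (j - m) → ZMod k),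
          wt p.1 * (if p.2 = lcVt k m j hj v
            then Multiset.countP (fun B0 => lcX k m j hj v p.1 ∈ B0) Z else 0) := by
      rw [hY, countP_finsetSum]
      refine Finset.sum_congr rfl fun p _ => ?_
      rw [Multiset.countP_nsmul, Multiset.countP_map]
      congr 1
      by_cases h : p.2 = lcVt k m j hj v
      · rw [if_pos h, Multiset.countP_eq_card_filter]
        congr 1
        refine Multiset.filter_congr fun B0 _ => ?_
        rw [lc_mem_iff, h]
        simp
      · rw [if_neg h, Multiset.card_eq_zero, Multiset.filter_eq_nil]
        intro B0 _
        rw [lc_mem_iff]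
        exact fun hcon => h hcon.1
    -- the value of `lcX` at coordinate 0
    have hx0 : ∀ c : ZMod k, lcX k m j hj v c ⟨0, hm⟩ = v0 - c := by
      intro c
      simp only [lcX, hv0]
      congr 1
    -- congruence from the hypothesis, in `ZMod r`
    have hmod : ∀ c : ZMod k,
        ((Multiset.countP (fun B0 => lcX k m j hj v c ∈ B0) Z : ℕ) : ZMod r) =
          ((if v0 - c = 0 then 1 else
            if v0 - c = ((k - 1 : ℕ) : ZMod k) then -1 else (0 : ℤ)) : ZMod r) := by
      intro c
      have := (ZMod.intCast_eq_intCast_iff _ _ r).2 (hZv (lcX k m j hj v c))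
      rw [hx0 c] at this
      push_cast at this ⊢
      exact this
    have hk1 : ((k - 1 : ℕ) : ZMod k) = -1 := by
      rw [Nat.cast_sub (by omega), ZMod.natCast_self, Nat.cast_one]
      ring
    have hF : ∀ c : ZMod k,
        ((if v0 - c = 0 then 1 else
          if v0 - c = ((k - 1 : ℕ) : ZMod k) then -1 else (0 : ℤ)) : ZMod r) =
        (if c = v0 then (1 : ZMod r) else 0) + (if c = v0 + 1 then (-1 : ZMod r) else 0) := by
      intro c
      have h1 : v0 - c = 0 ↔ c = v0 := by rw [sub_eq_zero, eq_comm]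
      have h2 : v0 - c = ((k - 1 : ℕ) : ZMod k) ↔ c = v0 + 1 := by
        rw [hk1]
        constructor
        · intro h; linear_combination -h
        · intro h; rw [h]; ring
      have hne : ¬(c = v0 ∧ c = v0 + 1) := by
        rintro ⟨rfl, h⟩
        exact one_ne_zero (left_eq_add.mp h)
      simp only [h1, h2]
      split_ifs with hA hB
      · exact absurd ⟨hA, hB⟩ hne
      · push_cast; ring
      · push_cast; ring
      · push_cast; ring
    calc ((Multiset.countP (fun B => v ∈ B) Y : ℤ) : ZMod r)
        = ((Multiset.countP (fun B => v ∈ B) Y : ℕ) : ZMod r) := by push_cast; ring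
      _ = ∑ p : ZMod k × (Fin (j - m) → ZMod k), (wt p.1 : ZMod r) *
            (if p.2 = lcVt k m j hj v then
              ((Multiset.countP (fun B0 => lcX k m j hj v p.1 ∈ B0) Z : ℕ) : ZMod r)
            else 0) := by
          rw [hcount]
          push_cast
          rfl
      _ = ∑ p : ZMod k × (Fin (j - m) → ZMod k), (wt p.1 : ZMod r) *
            (if p.2 = lcVt k m j hj v then
              ((if v0 - p.1 = 0 then 1 else
                if v0 - p.1 = ((k - 1 : ℕ) : ZMod k) then -1 else (0 : ℤ)) : ZMod r)
            else 0) := by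
          refine Finset.sum_congr rfl fun p _ => ?_
          rw [hmod p.1]
      _ = ∑ c : ZMod k, (wt c : ZMod r) *
            ((if v0 - c = 0 then 1 else
              if v0 - c = ((k - 1 : ℕ) : ZMod k) then -1 else (0 : ℤ)) : ZMod r) := by
          rw [Fintype.sum_prod_type]
          refine Finset.sum_congr rfl fun c _ => ?_
          simp only [mul_ite, mul_zero]
          rw [Finset.sum_ite_eq' Finset.univ (lcVt k m j hj v)]
          simp
      _ = (wt v0 : ZMod r) + (wt (v0 + 1) : ZMod r) * (-1) := by
          simp only [hF, mul_add, mul_ite, mul_zero]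
          rw [Finset.sum_add_distrib,
            Finset.sum_ite_eq' Finset.univ v0 (fun c => (wt c : ZMod r) * 1),
            Finset.sum_ite_eq' Finset.univ (v0 + 1) (fun c => (wt c : ZMod r) * (-1))]
          simp
      _ = (((if v0 = ((k - 1 : ℕ) : ZMod k) then 1 - (k : ℤ) else 1) : ℤ) : ZMod r) := by
          rw [apply_ite (Int.cast : ℤ → ZMod r)]
          by_cases hc : v0 = ((k - 1 : ℕ) : ZMod k)
          · rw [if_pos hc]
            have hval : v0.val = k - 1 := by rw [hc, ZMod.val_cast_of_lt (by omega)]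
            have h01 : v0 + 1 = 0 := by rw [hc, hk1]; ring
            have hw1 : wt v0 = 0 := by simp only [hwt]; omega
            have hw2 : wt (v0 + 1) = k - 1 := by
              rw [h01]; simp only [hwt, ZMod.val_zero]; omega
            rw [hw1, hw2]
            push_cast [Nat.cast_sub (show 1 ≤ k by omega)]
            ring
          · rw [if_neg hc]
            have hval : v0.val < k := ZMod.val_lt v0
            have hne' : v0.val ≠ k - 1 := fun h => hc (by rw [← h, ZMod.natCast_zmod_val])
            have hsucc : (v0 + 1).val = v0.val + 1 := by
              rw [ZMod.val_add_of_lt]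
              · rw [ZMod.val_one]
              · rw [ZMod.val_one]; omega
            have e1 : k - 1 - v0.val = (k - 1 - (v0.val + 1)) + 1 := by omega
            simp only [hwt, hsucc]
            rw [e1]
            push_cast
            ring
end

section
/- Let k ≥ 3, m ≥ 1, let H be a subgraph of the torus C_k^m that does not wrap, and set r = |V(H)|. Suppose there exists a finite multiset of restricted copies of H in C_k^{m+1} that is a (1, 1, ..., 1, 1-k)-layered cover of C_k^{m+1}. If W is a finite multiset of restricted copies of H in C_k^m such that every vertex of C_k^m lies in a number of members of W, counted with multiplicity, congruent to k^m modulo r, then there exists a finite multiset W' of restricted copies of H in C_k^{m+1} such that every vertex of C_k^{m+1} lies in a number of members of W', counted with multiplicity, congruent to k^{m-1} modulo r. -/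
open scoped Classical

theorem cover_dimension_step (k m : ℕ) (hk : 3 ≤ k) (hm : 1 ≤ m)
    (H : (torus k m).Subgraph) (hw : DoesNotWrap k m H.verts)
    -- there is a `(1, 1, ..., 1, 1-k)`-layered cover of `C_k^{m+1}`, with `r = |V(H)|`
    (hL : ∃ L : Multiset (Set (Fin (m + 1) → ZMod k)),
      (∀ B ∈ L, IsRestrictedCopy k H.verts B) ∧
      ∀ v : Fin (m + 1) → ZMod k,
        (Multiset.countP (fun B => v ∈ B) L : ℤ) ≡
          (if v ⟨0, Nat.succ_pos m⟩ = ((k - 1 : ℕ) : ZMod k) then 1 - (k : ℤ) else 1)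
          [ZMOD (H.verts.ncard : ℤ)])
    (W : Multiset (Set (Fin m → ZMod k)))
    (hWcopies : ∀ B ∈ W, IsRestrictedCopy k H.verts B)
    (hW : ∀ v : Fin m → ZMod k,
      (Multiset.countP (fun B => v ∈ B) W : ℤ) ≡ (k : ℤ) ^ m [ZMOD (H.verts.ncard : ℤ)]) :
    ∃ W' : Multiset (Set (Fin (m + 1) → ZMod k)),
      (∀ B ∈ W', IsRestrictedCopy k H.verts B) ∧
      ∀ v : Fin (m + 1) → ZMod k,
        (Multiset.countP (fun B => v ∈ B) W' : ℤ) ≡ (k : ℤ) ^ (m - 1)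
          [ZMOD (H.verts.ncard : ℤ)] := by
  classical
  obtain ⟨L, hLcopy, hLcount⟩ := hL
  have hm0 : 0 < m := hm
  set i0 : Fin m := ⟨0, hm0⟩ with hi0
  set w : Fin (m + 1) → ZMod k := fun ℓ => if (ℓ : ℕ) = 0 then 1 else 0 with hwdef
  set bd : (Fin m → ZMod k) → (Fin (m + 1) → ZMod k) := bendMap k m (m + 1) i0 1 1 with hbddef
  set σ : (Fin (m + 1) → ZMod k) → (Fin m → ZMod k) :=
    (fun v ℓ => if (ℓ : ℕ) = 0 then v ⟨m, Nat.lt_succ_self m⟩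
      else v ⟨ℓ, Nat.lt_succ_of_lt ℓ.isLt⟩) with hσdef
  -- simplification of the bend map with `i = 0`, `j = 1`, `s = 1`
  have hbd : ∀ (u : Fin m → ZMod k) (ℓ : Fin (m + 1)),
      bd u ℓ = if h : (ℓ : ℕ) < m then (if (ℓ : ℕ) = 0 then 0 else u ⟨ℓ, h⟩) else u i0 := by
    intro u ℓ
    have huz : ∀ h : (u i0).val < 1, u i0 = 0 := fun h =>
      (ZMod.val_eq_zero _).mp (Nat.lt_one_iff.mp h)
    simp only [hbddef, bendMap, hi0]
    by_cases h : (ℓ : ℕ) < m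
    · rw [dif_pos h, dif_pos h]
      by_cases h0 : (ℓ : ℕ) = 0
      · rw [if_pos h0, if_pos h0]
        by_cases hu : (u ⟨0, hm0⟩).val < 1
        · rw [if_pos hu]; exact huz hu
        · rw [if_neg hu]; push_cast; ring
      · rw [if_neg h0, if_neg h0]
    · rw [dif_neg h, dif_neg h]
      have hℓ : (ℓ : ℕ) = m + 1 - 1 := by omega
      rw [if_pos hℓ]
      by_cases hu : (u ⟨0, hm0⟩).val < 1
      · rw [if_pos hu]; exact (huz hu).symm
      · rw [if_neg hu]; push_cast; ring
  -- membership in the image of the bend map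
  have hmemb : ∀ (v : Fin (m + 1) → ZMod k) (B : Set (Fin m → ZMod k)),
      v ∈ bd '' B ↔ (v ⟨0, Nat.succ_pos m⟩ = 0 ∧ σ v ∈ B) := by
    intro v B
    constructor
    · rintro ⟨u, hu, rfl⟩
      refine ⟨by rw [hbd]; rw [dif_pos hm0, if_pos rfl], ?_⟩
      have hσu : σ (bd u) = u := by
        funext ℓ
        by_cases h0 : (ℓ : ℕ) = 0
        · simp only [hσdef]
          rw [if_pos h0, hbd, dif_neg (Nat.lt_irrefl m)]
          exact congrArg u (Fin.ext h0.symm)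
        · simp only [hσdef]
          rw [if_neg h0, hbd, dif_pos ℓ.isLt, if_neg h0]
      rw [hσu]; exact hu
    · rintro ⟨h0, hu⟩
      refine ⟨σ v, hu, ?_⟩
      funext ℓ
      rw [hbd]
      by_cases h : (ℓ : ℕ) < m
      · rw [dif_pos h]
        by_cases hz : (ℓ : ℕ) = 0
        · rw [if_pos hz]
          rw [show ℓ = ⟨0, Nat.succ_pos m⟩ from Fin.ext hz] 
          exact h0.symm
        · rw [if_neg hz]
          simp only [hσdef]
          rw [if_neg hz]
      · rw [dif_neg h]
        simp only [hσdef, hi0]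
        rw [if_pos trivial]
        exact congrArg v (Fin.ext (by show m = (ℓ : ℕ); omega))
  refine ⟨k ^ (m - 1) • L.map (fun B => (· + w) '' B) + W.map (fun B => bd '' B), ?_, ?_⟩
  · intro B hB
    rcases Multiset.mem_add.mp hB with hB | hB
    · obtain ⟨C, hC, rfl⟩ := Multiset.mem_map.mp (Multiset.mem_of_mem_nsmul hB)
      exact (hLcopy C hC).translate w
    · obtain ⟨C, hC, rfl⟩ := Multiset.mem_map.mp hB
      exact IsRestrictedCopy.bend (Nat.le_succ m) i0 1 1 (by omega) le_rfl (by omega)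
        (hWcopies C hC)
  · intro v
    rw [Multiset.countP_add, Multiset.countP_nsmul, Multiset.countP_map, Multiset.countP_map,
      ← Multiset.countP_eq_card_filter, ← Multiset.countP_eq_card_filter]
    have e1 : Multiset.countP (fun B => v ∈ (· + w) '' B) L
        = Multiset.countP (fun B => v - w ∈ B) L := by
      refine Multiset.countP_congr rfl fun B _ => propext ?_
      constructor
      · rintro ⟨x, hx, rfl⟩; simpa using hx
      · intro hx; exact ⟨v - w, hx, by simp⟩
    have e2 : Multiset.countP (fun B => v ∈ bd '' B) W
        = if v ⟨0, Nat.succ_pos m⟩ = 0 then Multiset.countP (fun B => σ v ∈ B) W else 0 := by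
      by_cases h0 : v ⟨0, Nat.succ_pos m⟩ = 0
      · rw [if_pos h0]
        refine Multiset.countP_congr rfl fun B _ => propext ?_
        rw [hmemb]
        exact ⟨fun h => h.2, fun h => ⟨h0, h⟩⟩
      · rw [if_neg h0, Multiset.countP_eq_zero]
        intro B _ hB
        exact h0 ((hmemb v B).mp hB).1
    rw [e1, e2]
    have hcond : ((v - w) ⟨0, Nat.succ_pos m⟩ = ((k - 1 : ℕ) : ZMod k))
        ↔ v ⟨0, Nat.succ_pos m⟩ = 0 := by
      have hk1 : ((k - 1 : ℕ) : ZMod k) = -1 := by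
        rw [Nat.cast_sub (by omega : 1 ≤ k), ZMod.natCast_self, Nat.cast_one, zero_sub]
      have hw0 : w ⟨0, Nat.succ_pos m⟩ = 1 := by simp [hwdef]
      rw [Pi.sub_apply, hw0, hk1, sub_eq_iff_eq_add, neg_add_cancel]
    have hLv := hLcount (v - w)
    have hWv := hW (σ v)
    have hpow : (k : ℤ) ^ m = (k : ℤ) ^ (m - 1) * k := by
      rw [← pow_succ]
      congr 1
      omega
    by_cases h0 : v ⟨0, Nat.succ_pos m⟩ = 0
    · rw [if_pos h0]
      rw [if_pos (hcond.mpr h0)] at hLv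
      push_cast
      calc ((k : ℤ) ^ (m - 1)) * (Multiset.countP (fun B => v - w ∈ B) L : ℤ)
            + (Multiset.countP (fun B => σ v ∈ B) W : ℤ)
          ≡ ((k : ℤ) ^ (m - 1)) * (1 - (k : ℤ)) + (k : ℤ) ^ m
            [ZMOD ((H.verts.ncard : ℤ))] := Int.ModEq.add (hLv.mul_left _) hWv
        _ = (k : ℤ) ^ (m - 1) := by rw [hpow]; ring
    · rw [if_neg h0]
      rw [if_neg (fun h => h0 (hcond.mp h))] at hLv
      push_cast
      calc ((k : ℤ) ^ (m - 1)) * (Multiset.countP (fun B => v - w ∈ B) L : ℤ) + 0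
          ≡ ((k : ℤ) ^ (m - 1)) * 1 + 0 [ZMOD ((H.verts.ncard : ℤ))] :=
            Int.ModEq.add (hLv.mul_left _) (Int.ModEq.refl 0)
        _ = (k : ℤ) ^ (m - 1) := by ring
end

section
/- Let k ≥ 3, let H be an induced subgraph of the torus C_k^m that does not wrap, let n > m, s ∈ {1,...,n-m}, i ∈ {1,...,m}, and j ∈ {0,...,k-2}. Then the image of V(H) under the bend map S^{n,s}_{i,j} induces in C_k^n a subgraph isomorphic to H; indeed the restriction of S^{n,s}_{i,j} to V(H) is a graph isomorphism from H onto this induced subgraph. -/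
section Aux

variable {k m n : ℕ} {i : Fin m} {j s : ℕ}

private lemma bm_lt (v : Fin m → ZMod k) (ℓ : Fin n) (h : (ℓ : ℕ) < m)
    (hne : (ℓ : ℕ) ≠ (i : ℕ)) : bendMap k m n i j s v ℓ = v ⟨ℓ, h⟩ := by
  simp only [bendMap, dif_pos h, if_neg hne]

private lemma bm_i (v : Fin m → ZMod k) (ℓ : Fin n) (h : (ℓ : ℕ) = (i : ℕ)) :
    bendMap k m n i j s v ℓ = if (v i).val < j then v i else (j : ZMod k) - 1 := by
  have hlt : (ℓ : ℕ) < m := h ▸ i.isLt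
  simp only [bendMap, dif_pos hlt, if_pos h]

private lemma bm_p (hs : 1 ≤ s) (v : Fin m → ZMod k) (ℓ : Fin n) (h : (ℓ : ℕ) = m + s - 1) :
    bendMap k m n i j s v ℓ = if (v i).val < j then 0 else v i - ((j : ZMod k) - 1) := by
  have hlt : ¬ (ℓ : ℕ) < m := by omega
  simp only [bendMap, dif_neg hlt, if_pos h]

private lemma bm_zero (v : Fin m → ZMod k) (ℓ : Fin n) (h1 : ¬ (ℓ : ℕ) < m)
    (h2 : (ℓ : ℕ) ≠ m + s - 1) : bendMap k m n i j s v ℓ = 0 := by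
  simp only [bendMap, dif_neg h1, if_neg h2]

private lemma bm_recover (hs : 1 ≤ s) (him : (i : ℕ) < n) (hp : m + s - 1 < n)
    (v : Fin m → ZMod k) :
    bendMap k m n i j s v ⟨i, him⟩ + bendMap k m n i j s v ⟨m + s - 1, hp⟩ = v i := by
  rw [bm_i v ⟨i, him⟩ rfl, bm_p hs v ⟨m + s - 1, hp⟩ rfl]
  split_ifs <;> ring

private lemma bm_inj (hmn : m < n) (hs : 1 ≤ s) (hs' : s ≤ n - m) :
    Function.Injective (bendMap k m n i j s) := by
  have him : (i : ℕ) < n := i.isLt.trans hmn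
  have hp : m + s - 1 < n := by omega
  intro u v h
  funext ℓ
  by_cases hℓ : ℓ = i
  · subst hℓ
    rw [← bm_recover hs him hp u, ← bm_recover hs him hp v, h]
  · have hne : (ℓ : ℕ) ≠ (i : ℕ) := fun hh => hℓ (Fin.ext hh)
    have := congrFun h ⟨ℓ, ℓ.isLt.trans hmn⟩
    rwa [bm_lt u ⟨ℓ, ℓ.isLt.trans hmn⟩ ℓ.isLt hne, bm_lt v ⟨ℓ, ℓ.isLt.trans hmn⟩ ℓ.isLt hne] at this

/-- forward: a torus relation on `u v` gives one on the bent images. -/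
private lemma bm_rel (hk : 3 ≤ k) (hmn : m < n) (hj : j ≤ k - 2) (hs : 1 ≤ s)
    (hs' : s ≤ n - m) {u v : Fin m → ZMod k}
    (hv : ∀ ℓ, (v ℓ).val ≤ k - 2)
    (h : ∃ c, u c - v c = 1 ∧ ∀ d, d ≠ c → u d = v d) :
    ∃ c, bendMap k m n i j s u c - bendMap k m n i j s v c = 1 ∧
      ∀ d, d ≠ c → bendMap k m n i j s u d = bendMap k m n i j s v d := by
  haveI : NeZero k := ⟨by omega⟩
  haveI : Fact (1 < k) := ⟨by omega⟩
  have him : (i : ℕ) < n := i.isLt.trans hmn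
  have hp : m + s - 1 < n := by omega
  obtain ⟨ℓ, h1, h2⟩ := h
  by_cases hℓi : ℓ = i
  · subst hℓi
    have hui : u ℓ = v ℓ + 1 := by linear_combination h1
    have hval : (u ℓ).val = (v ℓ).val + 1 := by
      rw [hui, ZMod.val_add, ZMod.val_one, Nat.mod_eq_of_lt (by have := hv ℓ; omega)]
    by_cases hb : (u ℓ).val < j
    · -- both below j : witness is coordinate i
      have ha : (v ℓ).val < j := by omega
      refine ⟨⟨ℓ, him⟩, ?_, ?_⟩
      · rw [bm_i u ⟨ℓ, him⟩ rfl, bm_i v ⟨ℓ, him⟩ rfl, if_pos hb, if_pos ha]; exact h1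
      · intro d hd
        by_cases hdm : (d : ℕ) < m
        · have hdi : (d : ℕ) ≠ (ℓ : ℕ) := fun hh => hd (Fin.ext hh)
          rw [bm_lt u d hdm hdi, bm_lt v d hdm hdi]
          exact h2 _ (fun hh => hdi (congrArg Fin.val hh))
        · by_cases hdp : (d : ℕ) = m + s - 1
          · rw [bm_p hs u d hdp, bm_p hs v d hdp, if_pos hb, if_pos ha]
          · rw [bm_zero u d hdm hdp, bm_zero v d hdm hdp]
    · by_cases ha : (v ℓ).val < j
      · -- crossing: (u ℓ).val = j
        have hjv : (u ℓ).val = j := by omega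
        have hj1 : 1 ≤ j := by omega
        refine ⟨⟨m + s - 1, hp⟩, ?_, ?_⟩
        · rw [bm_p hs u ⟨m + s - 1, hp⟩ rfl, bm_p hs v ⟨m + s - 1, hp⟩ rfl, if_neg hb, if_pos ha]
          have : u ℓ = (j : ZMod k) := by
            rw [← ZMod.natCast_rightInverse (u ℓ), hjv]
          rw [this]; ring
        · intro d hd
          by_cases hdm : (d : ℕ) < m
          · by_cases hdi : (d : ℕ) = (ℓ : ℕ)
            · rw [bm_i u d hdi, bm_i v d hdi, if_neg hb, if_pos ha]
              have : v ℓ = ((j - 1 : ℕ) : ZMod k) := by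
                rw [← ZMod.natCast_rightInverse (v ℓ)]
                congr 1
                omega
              rw [this, Nat.cast_sub hj1, Nat.cast_one]
            · rw [bm_lt u d hdm hdi, bm_lt v d hdm hdi]
              exact h2 _ (fun hh => hdi (congrArg Fin.val hh))
          · have hdp : (d : ℕ) ≠ m + s - 1 := fun hh => hd (Fin.ext hh)
            rw [bm_zero u d hdm hdp, bm_zero v d hdm hdp]
      · -- both at least j : witness is coordinate m+s-1
        refine ⟨⟨m + s - 1, hp⟩, ?_, ?_⟩
        · rw [bm_p hs u ⟨m + s - 1, hp⟩ rfl, bm_p hs v ⟨m + s - 1, hp⟩ rfl, if_neg hb, if_neg ha]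
          linear_combination h1
        · intro d hd
          by_cases hdm : (d : ℕ) < m
          · by_cases hdi : (d : ℕ) = (ℓ : ℕ)
            · rw [bm_i u d hdi, bm_i v d hdi, if_neg hb, if_neg ha]
            · rw [bm_lt u d hdm hdi, bm_lt v d hdm hdi]
              exact h2 _ (fun hh => hdi (congrArg Fin.val hh))
          · have hdp : (d : ℕ) ≠ m + s - 1 := fun hh => hd (Fin.ext hh)
            rw [bm_zero u d hdm hdp, bm_zero v d hdm hdp]
  · -- ℓ ≠ i : the differing coordinate is untouched
    have hℓn : (ℓ : ℕ) ≠ (i : ℕ) := fun hh => hℓi (Fin.ext hh)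
    have hvi : u i = v i := h2 i (fun hh => hℓi hh.symm)
    refine ⟨⟨ℓ, ℓ.isLt.trans hmn⟩, ?_, ?_⟩
    · rw [bm_lt u ⟨ℓ, ℓ.isLt.trans hmn⟩ ℓ.isLt hℓn, bm_lt v ⟨ℓ, ℓ.isLt.trans hmn⟩ ℓ.isLt hℓn]; exact h1
    · intro d hd
      by_cases hdm : (d : ℕ) < m
      · by_cases hdi : (d : ℕ) = (i : ℕ)
        · rw [bm_i u d hdi, bm_i v d hdi, hvi]
        · rw [bm_lt u d hdm hdi, bm_lt v d hdm hdi]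
          refine h2 _ (fun hh => hd ?_)
          exact Fin.ext (by simpa using congrArg Fin.val hh)
      · by_cases hdp : (d : ℕ) = m + s - 1
        · rw [bm_p hs u d hdp, bm_p hs v d hdp, hvi]
        · rw [bm_zero u d hdm hdp, bm_zero v d hdm hdp]

/-- backward: a torus relation on the bent images gives one on `u v`. -/
private lemma bm_rel_rev (hk : 3 ≤ k) (hmn : m < n) (hs : 1 ≤ s) (hs' : s ≤ n - m)
    {u v : Fin m → ZMod k}
    (h : ∃ c, bendMap k m n i j s u c - bendMap k m n i j s v c = 1 ∧
      ∀ d, d ≠ c → bendMap k m n i j s u d = bendMap k m n i j s v d) :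
    ∃ c, u c - v c = 1 ∧ ∀ d, d ≠ c → u d = v d := by
  haveI : Fact (1 < k) := ⟨by omega⟩
  have him : (i : ℕ) < n := i.isLt.trans hmn
  have hp : m + s - 1 < n := by omega
  obtain ⟨c, h1, h2⟩ := h
  by_cases hcm : (c : ℕ) < m
  · by_cases hci : (c : ℕ) = (i : ℕ)
    · -- c is the i-th coordinate; witness i
      have hcI : c = ⟨i, him⟩ := Fin.ext hci
      refine ⟨i, ?_, ?_⟩
      · have e1 := bm_recover (j := j) hs him hp u
        have e2 := bm_recover (j := j) hs him hp v
        have e3 := h2 ⟨m + s - 1, hp⟩ (by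
          intro hh
          have := congrArg Fin.val hh
          simp only [hcI] at this ⊢
          omega)
        rw [hcI] at h1
        linear_combination e2 - e1 + e3 + h1
      · intro d hd
        have hdn : (d : ℕ) ≠ (i : ℕ) := fun hh => hd (Fin.ext hh)
        have := h2 ⟨d, d.isLt.trans hmn⟩ (by
          intro hh
          have := congrArg Fin.val hh
          simp only [hcI] at this
          exact hdn this)
        rwa [bm_lt u ⟨d, d.isLt.trans hmn⟩ d.isLt hdn,
          bm_lt v ⟨d, d.isLt.trans hmn⟩ d.isLt hdn] at this
    · -- c corresponds to a coordinate ≠ i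
      refine ⟨⟨c, hcm⟩, ?_, ?_⟩
      · rwa [bm_lt u c hcm hci, bm_lt v c hcm hci] at h1
      · intro d hd
        by_cases hdi : d = i
        · subst hdi
          have e1 := bm_recover (j := j) hs him hp u
          have e2 := bm_recover (j := j) hs him hp v
          have e3 := h2 ⟨d, him⟩ (by
            intro hh
            have := congrArg Fin.val hh
            simp only at this
            exact hci (this ▸ rfl))
          have e4 := h2 ⟨m + s - 1, hp⟩ (by
            intro hh
            have := congrArg Fin.val hh
            simp only at this
            omega)
          linear_combination e2 - e1 + e3 + e4
        · have hdn : (d : ℕ) ≠ (i : ℕ) := fun hh => hdi (Fin.ext hh)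
          have := h2 ⟨d, d.isLt.trans hmn⟩ (by
            intro hh
            have := congrArg Fin.val hh
            simp only at this
            exact hd (Fin.ext this))
          rwa [bm_lt u ⟨d, d.isLt.trans hmn⟩ d.isLt hdn,
            bm_lt v ⟨d, d.isLt.trans hmn⟩ d.isLt hdn] at this
  · by_cases hcp : (c : ℕ) = m + s - 1
    · -- c = the new coordinate; witness i
      have hcP : c = ⟨m + s - 1, hp⟩ := Fin.ext hcp
      refine ⟨i, ?_, ?_⟩
      · have e1 := bm_recover (j := j) hs him hp u
        have e2 := bm_recover (j := j) hs him hp v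
        have e3 := h2 ⟨i, him⟩ (by
          intro hh
          have := congrArg Fin.val hh
          simp only [hcP] at this
          omega)
        rw [hcP] at h1
        linear_combination e2 - e1 + e3 + h1
      · intro d hd
        by_cases hdi : (d : ℕ) = (i : ℕ)
        · exact absurd (Fin.ext hdi) hd
        · have := h2 ⟨d, d.isLt.trans hmn⟩ (by
            intro hh
            have := congrArg Fin.val hh
            simp only [hcP] at this
            omega)
          rwa [bm_lt u ⟨d, d.isLt.trans hmn⟩ d.isLt hdi,
            bm_lt v ⟨d, d.isLt.trans hmn⟩ d.isLt hdi] at this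
    · exfalso
      rw [bm_zero u c hcm hcp, bm_zero v c hcm hcp, sub_zero] at h1
      exact zero_ne_one h1

private lemma bm_adj (hk : 3 ≤ k) (hmn : m < n) (hj : j ≤ k - 2) (hs : 1 ≤ s)
    (hs' : s ≤ n - m) {u v : Fin m → ZMod k}
    (hu : ∀ ℓ, (u ℓ).val ≤ k - 2) (hv : ∀ ℓ, (v ℓ).val ≤ k - 2) :
    (torus k n).Adj (bendMap k m n i j s u) (bendMap k m n i j s v) ↔
      (torus k m).Adj u v := by
  simp only [torus, SimpleGraph.fromRel_adj]
  constructor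
  · rintro ⟨hne, hrel | hrel⟩
    · exact ⟨fun hh => hne (by rw [hh]), Or.inl (bm_rel_rev hk hmn hs hs' hrel)⟩
    · exact ⟨fun hh => hne (by rw [hh]), Or.inr (bm_rel_rev hk hmn hs hs' hrel)⟩
  · rintro ⟨hne, hrel | hrel⟩
    · exact ⟨fun hh => hne (bm_inj hmn hs hs' hh), Or.inl (bm_rel hk hmn hj hs hs' hv hrel)⟩
    · exact ⟨fun hh => hne (bm_inj hmn hs hs' hh), Or.inr (bm_rel hk hmn hj hs hs' hu hrel)⟩

end Aux

theorem bend_is_induced_copy (k m n : ℕ) (hk : 3 ≤ k) (hmn : m < n)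
    (H : (torus k m).Subgraph) (hind : H.IsInduced) (hw : DoesNotWrap k m H.verts)
    (i : Fin m) (j s : ℕ) (hj : j ≤ k - 2) (hs : 1 ≤ s) (hs' : s ≤ n - m) :
    ∃ e : H.coe ≃g (torus k n).induce (bendMap k m n i j s '' H.verts),
      ∀ x : H.verts, (e x : Fin n → ZMod k) = bendMap k m n i j s (x : Fin m → ZMod k) := by
  have hinj : Function.Injective (bendMap k m n i j s) := bm_inj hmn hs hs'
  refine ⟨⟨Equiv.Set.image _ H.verts hinj, ?_⟩, ?_⟩
  · intro a b
    simp only [Equiv.Set.image_apply]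
    rw [SimpleGraph.comap_adj]
    simp only [Function.Embedding.coe_subtype]
    rw [bm_adj hk hmn hj hs hs' (hw a a.2) (hw b b.2)]
    rw [SimpleGraph.Subgraph.coe_adj]
    constructor
    · intro h
      exact hind a.2 b.2 h
    · exact fun h => H.adj_sub h
  · intro x
    rfl
end

section
/- Let k ≥ 3 be an odd integer and let n ≥ 1. If C is a subgraph of the torus C_k^n isomorphic to the cycle of length k, then there exist a vertex v of C_k^n and a coordinate i ∈ {1,...,n} such that the vertex set of C equals {v + ℓ·e_i : ℓ = 0, 1, ..., k-1}, where e_i denotes the vector whose i-th coordinate is 1 and whose other coordinates are 0. -/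
/-- The cycle of length `k`, on vertex set `ZMod k`: `i`, `j` adjacent iff `i - j = ±1`. -/
def cycleGraphZMod (k : ℕ) : SimpleGraph (ZMod k) :=
  SimpleGraph.fromRel fun i j => i - j = 1

theorem odd_cycle_in_torus_is_line (k n : ℕ) (hk : 3 ≤ k) (hodd : Odd k) (hn : 1 ≤ n)
    (C : (torus k n).Subgraph) (hiso : Nonempty (cycleGraphZMod k ≃g C.coe)) :
    ∃ (v : Fin n → ZMod k) (i : Fin n),
      C.verts =
        Set.range fun ℓ : ZMod k =>
          v + ℓ • (fun t => if t = i then (1 : ZMod k) else 0) := by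
  have hk0 : NeZero k := ⟨by omega⟩
  have hk2 : Fact (2 < k) := ⟨by omega⟩
  have hk1 : Fact (1 < k) := ⟨by omega⟩
  obtain ⟨f⟩ := hiso
  set w : ZMod k → (Fin n → ZMod k) := fun ℓ => ((f ℓ) : C.verts).1 with hw
  have hone : (1 : ZMod k) ≠ 0 := one_ne_zero
  have hne : (1 : ZMod k) ≠ -1 := fun h => ZMod.neg_one_ne_one h.symm
  have hadj : ∀ ℓ : ZMod k, (torus k n).Adj (w (ℓ+1)) (w ℓ) := by
    intro ℓ
    have h1 : (cycleGraphZMod k).Adj (ℓ+1) ℓ := by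
      rw [cycleGraphZMod, SimpleGraph.fromRel_adj]
      exact ⟨by simp [hone], Or.inl (by ring)⟩
    have h2 : C.coe.Adj (f (ℓ+1)) (f ℓ) := f.map_rel_iff.mpr h1
    exact C.adj_sub h2
  set d : ZMod k → (Fin n → ZMod k) := fun ℓ t => w (ℓ+1) t - w ℓ t with hdd
  have hd : ∀ ℓ, ∃ i : Fin n, (d ℓ i = 1 ∨ d ℓ i = -1) ∧ ∀ j, j ≠ i → d ℓ j = 0 := by
    intro ℓ
    have := hadj ℓ
    rw [torus, SimpleGraph.fromRel_adj] at this
    obtain ⟨-, h | h⟩ := this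
    · obtain ⟨i, h1, h2⟩ := h
      exact ⟨i, Or.inl h1, fun j hj => by simp [hdd, h2 j hj]⟩
    · obtain ⟨i, h1, h2⟩ := h
      refine ⟨i, Or.inr ?_, fun j hj => by simp [hdd, h2 j hj]⟩
      show w (ℓ+1) i - w ℓ i = -1
      linear_combination -h1
  choose I hI1 hI2 using hd
  -- sum of steps is zero in each coordinate
  have hsum : ∀ t, ∑ ℓ : ZMod k, d ℓ t = 0 := by
    intro t
    have h1 : ∑ ℓ : ZMod k, w (ℓ+1) t = ∑ ℓ : ZMod k, w ℓ t :=
      Fintype.sum_equiv (Equiv.addRight 1) _ _ (fun ℓ => rfl)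
    simp [hdd, Finset.sum_sub_distrib, h1]
  set A : Fin n → Finset (ZMod k) := fun j => Finset.univ.filter (fun ℓ => d ℓ j = 1) with hA
  set B : Fin n → Finset (ZMod k) := fun j => Finset.univ.filter (fun ℓ => d ℓ j = -1) with hB
  have hIiff : ∀ ℓ j, I ℓ = j ↔ (d ℓ j = 1 ∨ d ℓ j = -1) := by
    intro ℓ j
    constructor
    · rintro rfl; exact hI1 ℓ
    · intro h
      by_contra hne'
      rw [hI2 ℓ j (Ne.symm hne')] at h
      rcases h with h | h
      · exact hone h.symm
      · exact hone (neg_eq_zero.mp h.symm)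
  have hdisj : ∀ j, Disjoint (A j) (B j) := by
    intro j
    rw [Finset.disjoint_left]
    intro ℓ h1 h2
    simp only [hA, Finset.mem_filter, Finset.mem_univ, true_and] at h1
    simp only [hB, Finset.mem_filter, Finset.mem_univ, true_and] at h2
    exact hne (h1.symm.trans h2)
  have hfiber : ∀ j, A j ∪ B j = Finset.univ.filter (fun ℓ => I ℓ = j) := by
    intro j; ext ℓ
    simp only [Finset.mem_union, hA, hB, Finset.mem_filter, Finset.mem_univ, true_and, hIiff]
  have hcardsum : ∑ j : Fin n, ((A j).card + (B j).card) = k := by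
    have h1 : ∀ j : Fin n, (A j).card + (B j).card
        = (Finset.univ.filter (fun ℓ => I ℓ = j)).card := by
      intro j
      rw [← hfiber j, Finset.card_union_of_disjoint (hdisj j)]
    calc ∑ j : Fin n, ((A j).card + (B j).card)
        = ∑ j : Fin n, (Finset.univ.filter (fun ℓ => I ℓ = j)).card :=
          Finset.sum_congr rfl (fun j _ => h1 j)
      _ = (Finset.univ : Finset (ZMod k)).card :=
          (Finset.card_eq_sum_card_fiberwise (fun ℓ _ => Finset.mem_univ (I ℓ))).symm
      _ = k := by simp [ZMod.card]
  have hex : ∃ j : Fin n, ¬ Even ((A j).card + (B j).card) := by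
    by_contra h
    push_neg at h
    try simp only [not_not] at h
    have heven : Even (∑ j : Fin n, ((A j).card + (B j).card)) :=
      Finset.even_sum _ (fun j _ => h j)
    rw [hcardsum] at heven
    exact (Nat.not_even_iff_odd.mpr hodd) heven
  obtain ⟨j, hoddj⟩ := hex
  -- the telescoping sum in coordinate j equals #A - #B
  have hval : ∀ ℓ, d ℓ j = (if ℓ ∈ A j then (1:ZMod k) else 0)
      + (if ℓ ∈ B j then (-1:ZMod k) else 0) := by
    intro ℓ
    by_cases h1 : d ℓ j = 1
    · have h2 : ℓ ∉ B j := by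
        simp only [hB, Finset.mem_filter, Finset.mem_univ, true_and]
        rw [h1]; exact hne
      simp [hA, hB, h1, h2, hne]
    · by_cases h2 : d ℓ j = -1
      · simp [hA, hB, h1, h2, Ne.symm hne]
      · have h3 : d ℓ j = 0 := by
          by_cases h4 : I ℓ = j
          · exact absurd ((hIiff ℓ j).mp h4) (not_or.mpr ⟨h1, h2⟩)
          · exact hI2 ℓ j (Ne.symm h4)
        simp [hA, hB, h1, h2, h3]
  have hmod : (((A j).card : ZMod k)) = ((B j).card : ZMod k) := by
    have h0 := hsum j
    rw [Finset.sum_congr rfl (fun ℓ _ => hval ℓ), Finset.sum_add_distrib,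
      Finset.sum_ite_mem, Finset.sum_ite_mem, Finset.univ_inter, Finset.univ_inter,
      Finset.sum_const, Finset.sum_const] at h0
    have : ((A j).card : ZMod k) - ((B j).card : ZMod k) = 0 := by
      rw [sub_eq_add_neg]; simpa using h0
    linear_combination this
  -- integer counting: one of A, B is everything
  have hAle : (A j).card ≤ k := le_trans (Finset.card_le_univ _) (by simp [ZMod.card])
  have hBle : (B j).card ≤ k := le_trans (Finset.card_le_univ _) (by simp [ZMod.card])
  have hmodeq : (A j).card ≡ (B j).card [MOD k] := (ZMod.natCast_eq_natCast_iff _ _ _).mp hmod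
  have hpar : ((A j).card + (B j).card) % 2 = 1 :=
    Nat.odd_iff.mp (Nat.not_even_iff_odd.mp hoddj)
  have hcases : ((A j).card = k ∧ (B j).card = 0) ∨ ((A j).card = 0 ∧ (B j).card = k) := by
    rcases le_total ((A j).card) ((B j).card) with hle | hle
    · have hdvd : k ∣ (B j).card - (A j).card := (Nat.modEq_iff_dvd' hle).mp hmodeq
      have h0 : (B j).card - (A j).card = 0 ∨ (B j).card - (A j).card = k := by
        rcases Nat.eq_zero_or_pos ((B j).card - (A j).card) with h | h
        · exact Or.inl h
        · exact Or.inr (le_antisymm (by omega) (Nat.le_of_dvd h hdvd))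
      omega
    · have hdvd : k ∣ (A j).card - (B j).card := (Nat.modEq_iff_dvd' hle).mp hmodeq.symm
      have h0 : (A j).card - (B j).card = 0 ∨ (A j).card - (B j).card = k := by
        rcases Nat.eq_zero_or_pos ((A j).card - (B j).card) with h | h
        · exact Or.inl h
        · exact Or.inr (le_antisymm (by omega) (Nat.le_of_dvd h hdvd))
      omega
  -- extract the common step ε • e_j
  obtain ⟨ε, hε2, hdj, hdjne⟩ :
      ∃ ε : ZMod k, ε * ε = 1 ∧ (∀ ℓ, d ℓ j = ε) ∧ ε ≠ 0 := by
    rcases hcases with ⟨ha, hb⟩ | ⟨ha, hb⟩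
    · refine ⟨1, one_mul 1, ?_, hone⟩
      intro ℓ
      have hAuniv : A j = Finset.univ :=
        Finset.eq_univ_of_card _ (by rw [ha, ZMod.card])
      have := Finset.eq_univ_iff_forall.mp hAuniv ℓ
      simpa [hA] using this
    · refine ⟨-1, by ring, ?_, fun h => hone (neg_eq_zero.mp h)⟩
      intro ℓ
      have hBuniv : B j = Finset.univ :=
        Finset.eq_univ_of_card _ (by rw [hb, ZMod.card])
      have := Finset.eq_univ_iff_forall.mp hBuniv ℓ
      simpa [hB] using this
  have hIj : ∀ ℓ, I ℓ = j := by
    intro ℓ; by_contra h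
    exact hdjne ((hdj ℓ).symm.trans (hI2 ℓ j (Ne.symm h)))
  have hd0 : ∀ ℓ t, t ≠ j → d ℓ t = 0 := fun ℓ t ht =>
    hI2 ℓ t (by rw [hIj ℓ]; exact ht)
  have hde : ∀ ℓ t, d ℓ t = ε * (if t = j then 1 else 0) := by
    intro ℓ t
    by_cases ht : t = j
    · subst ht; simp [hdj ℓ]
    · simp [ht, hd0 ℓ t ht]
  have hstep : ∀ ℓ t, w (ℓ+1) t = w ℓ t + ε * (if t = j then 1 else 0) := by
    intro ℓ t
    have h := hde ℓ t
    simp only [hdd] at h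
    linear_combination h
  have hnat : ∀ (m : ℕ) (t : Fin n),
      w ((m : ZMod k)) t = w 0 t + (ε * m) * (if t = j then 1 else 0) := by
    intro m
    induction m with
    | zero => intro t; simp
    | succ m ih =>
      intro t
      have h1 : ((m+1 : ℕ) : ZMod k) = (m : ZMod k) + 1 := by push_cast; ring
      rw [h1, hstep, ih t]
      push_cast
      ring
  have hall : ∀ (ℓ : ZMod k) (t : Fin n),
      w ℓ t = w 0 t + (ε * ℓ) * (if t = j then 1 else 0) := by
    intro ℓ t
    have h := hnat ℓ.val t
    rwa [ZMod.natCast_val, ZMod.cast_id] at h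
  refine ⟨w 0, j, ?_⟩
  have hverts : C.verts = Set.range w := by
    ext x
    constructor
    · intro hx
      obtain ⟨ℓ, hℓ⟩ := f.toEquiv.surjective ⟨x, hx⟩
      exact ⟨ℓ, congrArg Subtype.val hℓ⟩
    · rintro ⟨ℓ, rfl⟩
      exact ((f ℓ) : C.verts).2
  have hwcomp : w = (fun ℓ : ZMod k =>
      w 0 + ℓ • (fun t => if t = j then (1:ZMod k) else 0)) ∘ (fun ℓ => ε * ℓ) := by
    funext ℓ
    funext t
    simp only [Function.comp_apply, Pi.add_apply, Pi.smul_apply, smul_eq_mul]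
    exact hall ℓ t
  have hsurj : Function.Surjective (fun ℓ : ZMod k => ε * ℓ) := fun y =>
    ⟨ε * y, by show ε * (ε * y) = y; rw [← mul_assoc, hε2, one_mul]⟩
  have key : Set.range w
      = Set.range (fun ℓ : ZMod k => w 0 + ℓ • (fun t => if t = j then (1:ZMod k) else 0)) := by
    conv_lhs => rw [hwcomp]
    exact Function.Surjective.range_comp hsurj _
  exact hverts.trans key
end

section
/- Let d ≥ 1 and let H be a subgraph of the hypercube Q_d with at least one edge. Suppose H is stiff and there is an odd integer c > 1 such that for every direction i ∈ D(H), the number of edges of H in direction i equals c. Then for no n ≥ 1 can the edge set of Q_n be partitioned into the edge sets of pairwise edge-disjoint subgraphs of Q_n each isomorphic to H. -/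
/-- The hypercube `Q_n`: vertices are functions `Fin n → ZMod 2`, adjacent iff they
differ in exactly one coordinate. -/
def cube (n : ℕ) : SimpleGraph (Fin n → ZMod 2) :=
  SimpleGraph.fromRel fun u v => ∃ i, u i ≠ v i ∧ ∀ j, j ≠ i → u j = v j

/-- `E_i(K)`: the set of edges of the subgraph `K` of `Q_n` whose direction is `i`,
i.e. whose endpoints differ in coordinate `i`. -/
def edgesInDir {n : ℕ} (K : (cube n).Subgraph) (i : Fin n) :
    Set (Sym2 (Fin n → ZMod 2)) :=
  {e | e ∈ K.edgeSet ∧ ∃ u v, e = s(u, v) ∧ u i ≠ v i}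

/-- `H` is stiff: for every `n ≥ k` and every isomorphism `φ` from `H` to a subgraph `H'`
of `Q_n`, there is a map `f`, injective on the set `D(H)` of directions used by `H`, such
that `φ` sends every edge of `H` of direction `i` to an edge of `H'` of direction `f i`
(equivalently, `φ(E_i(H)) = E_{f(i)}(H')` for every `i ∈ D(H)`). -/
def Stiff {k : ℕ} (H : (cube k).Subgraph) : Prop :=
  ∀ n : ℕ, k ≤ n → ∀ H' : (cube n).Subgraph, ∀ φ : H.coe ≃g H'.coe,
    ∃ f : Fin k → Fin n,
      Set.InjOn f {i | (edgesInDir H i).Nonempty} ∧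
      ∀ u v : H.verts, H.coe.Adj u v → ∀ i : Fin k,
        (u : Fin k → ZMod 2) i ≠ (v : Fin k → ZMod 2) i →
        (φ u : Fin n → ZMod 2) (f i) ≠ (φ v : Fin n → ZMod 2) (f i)

/-- The edge set of `G` can be partitioned into the edge sets of pairwise edge-disjoint
subgraphs of `G`, each isomorphic to `H` (copies need not be induced). -/
def HasPerfectEdgePacking {V W : Type*} (G : SimpleGraph V) (H : SimpleGraph W) : Prop :=
  ∃ P : Set G.Subgraph,
    (∀ K ∈ P, Nonempty (H ≃g K.coe)) ∧
    P.PairwiseDisjoint (fun K => K.edgeSet) ∧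
    ⋃ K ∈ P, K.edgeSet = G.edgeSet



lemma cube_adj {n : ℕ} {u v : Fin n → ZMod 2} :
    (cube n).Adj u v ↔ ∃ i, u i ≠ v i ∧ ∀ j, j ≠ i → u j = v j := by
  constructor
  · rintro ⟨hne, h | h⟩
    · exact h
    · obtain ⟨i, hi, hj⟩ := h
      exact ⟨i, Ne.symm hi, fun j hj' => (hj j hj').symm⟩
  · rintro ⟨i, hi, hj⟩
    refine ⟨fun h => hi (by rw [h]), Or.inl ⟨i, hi, hj⟩⟩

lemma dir_unique {n : ℕ} {u v : Fin n → ZMod 2} (h : (cube n).Adj u v)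
    {i i' : Fin n} (hi : u i ≠ v i) (hi' : u i' ≠ v i') : i = i' := by
  obtain ⟨i₀, h₀, hj⟩ := cube_adj.mp h
  have e1 : i = i₀ := by by_contra hc; exact hi (hj i hc)
  have e2 : i' = i₀ := by by_contra hc; exact hi' (hj i' hc)
  rw [e1, e2]

def delta {n : ℕ} (j : Fin n) : Fin n → ZMod 2 := fun k => if k = j then 1 else 0

lemma zmod2_ne_iff : ∀ {a b : ZMod 2}, a ≠ b ↔ b = a + 1 := by decide

lemma add_delta_apply {n : ℕ} (j : Fin n) (u : Fin n → ZMod 2) (k : Fin n) :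
    (u + delta j) k = if k = j then u k + 1 else u k := by
  simp [delta]; split <;> simp

lemma cube_adj_add_delta {n : ℕ} (j : Fin n) (u : Fin n → ZMod 2) :
    (cube n).Adj u (u + delta j) := by
  rw [cube_adj]
  refine ⟨j, ?_, fun k hk => ?_⟩
  · rw [add_delta_apply]; simp
  · rw [add_delta_apply]; simp [hk]

lemma eq_add_delta {n : ℕ} {u v : Fin n → ZMod 2} {j : Fin n}
    (h : (cube n).Adj u v) (hj : u j ≠ v j) : v = u + delta j := by
  funext k
  rw [add_delta_apply]
  by_cases hk : k = j
  · subst hk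
    rw [zmod2_ne_iff] at hj; simp [hj]
  · simp [hk]
    obtain ⟨i, hi, hall⟩ := cube_adj.mp h
    have : j = i := dir_unique h hj hi
    exact (hall k (by rw [← this]; exact hk)).symm


lemma mem_edgesInDir {n : ℕ} {K : (cube n).Subgraph} {i : Fin n}
    {a b : Fin n → ZMod 2} :
    s(a, b) ∈ edgesInDir K i ↔ s(a, b) ∈ K.edgeSet ∧ a i ≠ b i := by
  unfold edgesInDir
  simp only [Set.mem_setOf_eq, and_congr_right_iff]
  intro _
  constructor
  · rintro ⟨u, v, he, hne⟩
    rw [Sym2.eq_iff] at he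
    rcases he with ⟨rfl, rfl⟩ | ⟨rfl, rfl⟩
    · exact hne
    · exact hne.symm
  · intro h; exact ⟨a, b, rfl, h⟩


lemma z2cases : ∀ x : ZMod 2, x = 0 ∨ x = 1 := by decide
lemma z2add11 : ∀ x : ZMod 2, x + 1 + 1 = x := by decide
lemma z2ne0 : ∀ x : ZMod 2, x ≠ 0 ↔ x = 1 := by decide
lemma z2add10 : (1 : ZMod 2) + 1 = 0 := by decide
lemma z2selfne : ∀ x : ZMod 2, x ≠ x + 1 := by decide

lemma add_delta_add_delta {n : ℕ} (j : Fin n) (u : Fin n → ZMod 2) :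
    u + delta j + delta j = u := by
  funext k
  rw [add_delta_apply, add_delta_apply]
  by_cases h : k = j <;> simp [h, z2add11]

lemma card_dir_top {n : ℕ} (hn : 1 ≤ n) (j : Fin n) :
    (edgesInDir (⊤ : (cube n).Subgraph) j).ncard = 2 ^ (n - 1) := by
  have htop : ∀ a b : Fin n → ZMod 2,
      s(a, b) ∈ (⊤ : (cube n).Subgraph).edgeSet ↔ (cube n).Adj a b := by
    intro a b; simp
  have key : edgesInDir (⊤ : (cube n).Subgraph) j
      = (fun u => s(u, u + delta j)) '' {u | u j = 0} := by
    apply Set.Subset.antisymm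
    · intro e he
      induction e using Sym2.ind with
      | _ a b =>
        rw [mem_edgesInDir, htop] at he
        obtain ⟨hadj, hne⟩ := he
        rcases z2cases (a j) with h0 | h1
        · refine ⟨a, h0, ?_⟩
          simp only
          rw [← eq_add_delta hadj hne]
        · have hb : b j = 0 := by
            rw [zmod2_ne_iff] at hne
            rw [hne, h1, z2add10]
          refine ⟨b, hb, ?_⟩
          simp only
          rw [← eq_add_delta hadj.symm (Ne.symm hne), Sym2.eq_swap]
    · rintro e ⟨u, hu, rfl⟩
      refine mem_edgesInDir.mpr ⟨(htop _ _).mpr (cube_adj_add_delta j u), ?_⟩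
      rw [add_delta_apply]
      simp only [if_pos rfl]
      exact z2selfne (u j)
  have hinjOn : Set.InjOn (fun u : Fin n → ZMod 2 => s(u, u + delta j))
      {u : Fin n → ZMod 2 | u j = 0} := by
    intro u hu u' hu' he
    have he' : s(u, u + delta j) = s(u', u' + delta j) := he
    rw [Sym2.eq_iff] at he'
    rcases he' with ⟨h1, _⟩ | ⟨h1, h2⟩
    · exact h1
    · exfalso
      simp only [Set.mem_setOf_eq] at hu hu'
      rw [h1, add_delta_apply] at hu
      simp only [if_pos rfl, hu'] at hu
      exact absurd hu (by decide)
  rw [key, Set.ncard_image_of_injOn hinjOn]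
  have hcompl : {u : Fin n → ZMod 2 | u j = 0}ᶜ
        = (fun u => u + delta j) '' {u : Fin n → ZMod 2 | u j = 0} := by
      ext x
      simp only [Set.mem_compl_iff, Set.mem_setOf_eq, Set.mem_image]
      constructor
      · intro hx
        refine ⟨x + delta j, ?_, add_delta_add_delta j x⟩
        rw [add_delta_apply]
        simp only [if_pos rfl, if_true]
        have hx' : x j = 1 := (z2ne0 _).mp hx
        rw [hx', z2add10]
      · rintro ⟨u, hu, rfl⟩
        rw [add_delta_apply]
        simp only [if_pos rfl, hu]
        decide
  have hinj : Function.Injective (fun u : Fin n → ZMod 2 => u + delta j) :=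
    Function.LeftInverse.injective (g := fun u => u + delta j)
      (fun u => add_delta_add_delta j u)
  have h1 : {u : Fin n → ZMod 2 | u j = 0}ᶜ.ncard
      = {u : Fin n → ZMod 2 | u j = 0}.ncard := by
    rw [hcompl, Set.ncard_image_of_injective _ hinj]
  have h2 := Set.ncard_add_ncard_compl {u : Fin n → ZMod 2 | u j = 0}
  rw [h1] at h2
  have h3 : Nat.card (Fin n → ZMod 2) = 2 ^ n := by
    simp [Nat.card_eq_fintype_card]
  rw [h3] at h2
  have h4 : 2 ^ n = 2 * 2 ^ (n - 1) := by
    have hn' : n - 1 + 1 = n := Nat.succ_pred_eq_of_pos hn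
    conv_lhs => rw [← hn']
    rw [pow_succ']
  rw [← two_mul] at h2
  exact Nat.eq_of_mul_eq_mul_left (by norm_num) (h2.trans h4)

section iota
variable {n m : ℕ} (h : n ≤ m)

def iotaFun (_h : n ≤ m) (u : Fin n → ZMod 2) : Fin m → ZMod 2 :=
  fun k => if hk : (k : ℕ) < n then u ⟨k, hk⟩ else 0

lemma iotaFun_castLE (u : Fin n → ZMod 2) (j : Fin n) :
    iotaFun h u (Fin.castLE h j) = u j := by
  simp [iotaFun, Fin.castLE]

lemma iotaFun_injective : Function.Injective (iotaFun h) := by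
  intro u v huv
  funext j
  rw [← iotaFun_castLE h u j, ← iotaFun_castLE h v j, huv]

lemma iotaFun_ne {u v : Fin n → ZMod 2} {k : Fin m}
    (hk : iotaFun h u k ≠ iotaFun h v k) :
    ∃ j : Fin n, k = Fin.castLE h j ∧ u j ≠ v j := by
  by_cases hlt : (k : ℕ) < n
  · refine ⟨⟨k, hlt⟩, by ext; simp, ?_⟩
    intro hc
    apply hk
    simp [iotaFun, hlt, hc]
  · exfalso; apply hk; simp [iotaFun, hlt]

def iotaHom : cube n →g cube m where
  toFun := iotaFun h
  map_rel' := by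
    intro u v huv
    rw [cube_adj] at huv ⊢
    obtain ⟨i, hi, hall⟩ := huv
    refine ⟨Fin.castLE h i, ?_, ?_⟩
    · rw [iotaFun_castLE, iotaFun_castLE]; exact hi
    · intro k hk
      by_cases hlt : (k : ℕ) < n
      · have : (⟨k, hlt⟩ : Fin n) ≠ i := by
          intro hc
          apply hk
          rw [← hc]
          ext; simp
        have := hall ⟨k, hlt⟩ this
        simp [iotaFun, hlt, this]
      · simp [iotaFun, hlt]

end iota

noncomputable def mapIso {n m : ℕ} (h : n ≤ m) (K : (cube n).Subgraph) :
    K.coe ≃g (K.map (iotaHom h)).coe where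
  toEquiv := Equiv.Set.image (iotaFun h) K.verts (iotaFun_injective h)
  map_rel_iff' := by
    intro a b
    simp only [SimpleGraph.Subgraph.coe_adj, Equiv.Set.image_apply]
    constructor
    · rintro ⟨u, v, huv, hu, hv⟩
      have hu' : u = (a : Fin n → ZMod 2) := iotaFun_injective h hu
      have hv' : v = (b : Fin n → ZMod 2) := iotaFun_injective h hv
      rw [hu', hv'] at huv
      exact huv
    · intro huv
      exact ⟨a, b, huv, rfl, rfl⟩

lemma sym2_injOn {α β : Type*} {f : α → β} {S : Set α} (hf : Set.InjOn f S)
    {T : Set (Sym2 α)} (hT : ∀ e ∈ T, ∀ x ∈ e, x ∈ S) :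
    Set.InjOn (Sym2.map f) T := by
  intro e1 h1 e2 h2 he
  induction e1 using Sym2.ind with
  | _ a b =>
    induction e2 using Sym2.ind with
    | _ u v =>
      have ha : a ∈ S := hT _ h1 a (by simp)
      have hb : b ∈ S := hT _ h1 b (by simp)
      have hu : u ∈ S := hT _ h2 u (by simp)
      have hv : v ∈ S := hT _ h2 v (by simp)
      simp only [Sym2.map_pair_eq, Sym2.eq_iff] at he ⊢
      rcases he with ⟨h3, h4⟩ | ⟨h3, h4⟩
      · exact Or.inl ⟨hf ha hu h3, hf hb hv h4⟩
      · exact Or.inr ⟨hf ha hv h3, hf hb hu h4⟩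

lemma edgesInDir_map {n m : ℕ} (h : n ≤ m) (K : (cube n).Subgraph) (j : Fin n) :
    edgesInDir (K.map (iotaHom h)) (Fin.castLE h j)
      = Sym2.map (iotaFun h) '' edgesInDir K j := by
  apply Set.Subset.antisymm
  · intro e' he'
    induction e' using Sym2.ind with
    | _ x y =>
      rw [mem_edgesInDir, SimpleGraph.Subgraph.mem_edgeSet,
        SimpleGraph.Subgraph.map_adj] at he'
      obtain ⟨⟨u, v, huv, hx, hy⟩, hne⟩ := he'
      refine ⟨s(u, v), ?_, ?_⟩
      · rw [mem_edgesInDir, SimpleGraph.Subgraph.mem_edgeSet]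
        refine ⟨huv, ?_⟩
        intro hc
        apply hne
        rw [← hx, ← hy]
        show iotaFun h u (Fin.castLE h j) = iotaFun h v (Fin.castLE h j)
        rw [iotaFun_castLE, iotaFun_castLE, hc]
      · rw [Sym2.map_pair_eq]
        rw [show iotaFun h u = x from hx, show iotaFun h v = y from hy]
  · rintro e' ⟨e, he, rfl⟩
    induction e using Sym2.ind with
    | _ u v =>
      rw [mem_edgesInDir, SimpleGraph.Subgraph.mem_edgeSet] at he
      obtain ⟨huv, hne⟩ := he
      rw [Sym2.map_pair_eq, mem_edgesInDir, SimpleGraph.Subgraph.mem_edgeSet,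
        SimpleGraph.Subgraph.map_adj]
      refine ⟨⟨u, v, huv, rfl, rfl⟩, ?_⟩
      rw [iotaFun_castLE, iotaFun_castLE]
      exact hne


lemma edgesInDir_verts {n : ℕ} {K : (cube n).Subgraph} {i : Fin n} :
    ∀ e ∈ edgesInDir K i, ∀ x ∈ e, x ∈ K.verts := by
  intro e he x hx
  induction e using Sym2.ind with
  | _ a b =>
    have hadj : K.Adj a b := SimpleGraph.Subgraph.mem_edgeSet.mp he.1
    rcases Sym2.mem_iff.mp hx with rfl | rfl
    · exact K.edge_vert hadj
    · exact K.edge_vert hadj.symm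

lemma copy_dvd {d : ℕ} (H : (cube d).Subgraph) (hstiff : Stiff H) (c : ℕ)
    (hdir : ∀ i : Fin d, (edgesInDir H i).Nonempty → (edgesInDir H i).ncard = c)
    {n : ℕ} (K : (cube n).Subgraph) (φ : H.coe ≃g K.coe) (j : Fin n) :
    c ∣ (edgesInDir K j).ncard := by
  set m := max n d with hm
  have hnm : n ≤ m := le_max_left n d
  have hdm : d ≤ m := le_max_right n d
  set K' := K.map (iotaHom hnm) with hK'
  set φ' : H.coe ≃g K'.coe := φ.trans (mapIso hnm K) with hφ'
  obtain ⟨f, hfinj, hfdir⟩ := hstiff m hdm K' φ'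
  classical
  set Ψ : (Fin d → ZMod 2) → (Fin m → ZMod 2) :=
    fun x => if hx : x ∈ H.verts then ((φ' ⟨x, hx⟩ : K'.verts) : Fin m → ZMod 2) else 0
    with hΨ
  have hΨval : ∀ (u : H.verts), Ψ (u : Fin d → ZMod 2) = (φ' u : Fin m → ZMod 2) := by
    intro u
    rw [hΨ]
    simp only [dif_pos u.property]
  have hΨinj : Set.InjOn Ψ H.verts := by
    intro x hx y hy hxy
    rw [hΨval ⟨x, hx⟩, hΨval ⟨y, hy⟩] at hxy
    have := φ'.toEquiv.injective (Subtype.ext hxy)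
    exact congrArg Subtype.val this
  -- the key claim
  have claim : ∀ x y : Fin m → ZMod 2, K'.Adj x y →
      x (Fin.castLE hnm j) ≠ y (Fin.castLE hnm j) →
      ∃ i : Fin d, (edgesInDir H i).Nonempty ∧ f i = Fin.castLE hnm j ∧
        s(x, y) ∈ Sym2.map Ψ '' edgesInDir H i := by
    intro x y hadj hne
    have hx : x ∈ K'.verts := K'.edge_vert hadj
    have hy : y ∈ K'.verts := K'.edge_vert hadj.symm
    set a : K'.verts := ⟨x, hx⟩
    set b : K'.verts := ⟨y, hy⟩
    have hab : K'.coe.Adj a b := hadj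
    set u : H.verts := φ'.symm a with hu
    set v : H.verts := φ'.symm b with hv
    have hφu : φ' u = a := φ'.toEquiv.apply_symm_apply a
    have hφv : φ' v = b := φ'.toEquiv.apply_symm_apply b
    have huv : H.coe.Adj u v := by
      rw [hu, hv]
      exact φ'.symm.map_adj_iff.mpr hab
    have hcubeadj : (cube d).Adj (u : Fin d → ZMod 2) (v : Fin d → ZMod 2) :=
      H.adj_sub huv
    obtain ⟨i, hi, -⟩ := cube_adj.mp hcubeadj
    have hedge : s((u : Fin d → ZMod 2), (v : Fin d → ZMod 2)) ∈ edgesInDir H i :=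
      mem_edgesInDir.mpr ⟨SimpleGraph.Subgraph.mem_edgeSet.mpr huv, hi⟩
    have hdirm : (φ' u : Fin m → ZMod 2) (f i) ≠ (φ' v : Fin m → ZMod 2) (f i) :=
      hfdir u v huv i hi
    rw [hφu, hφv] at hdirm
    have hxy : (cube m).Adj x y := K'.adj_sub hadj
    have hfi : f i = Fin.castLE hnm j := dir_unique hxy hdirm hne
    refine ⟨i, ⟨_, hedge⟩, hfi, s((u : Fin d → ZMod 2), (v : Fin d → ZMod 2)), hedge, ?_⟩
    rw [Sym2.map_pair_eq, hΨval u, hΨval v, hφu, hφv]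
  -- relate edgesInDir K j to edgesInDir K' (castLE j)
  have hcard_eq : (edgesInDir K j).ncard
      = (edgesInDir K' (Fin.castLE hnm j)).ncard := by
    rw [hK', edgesInDir_map hnm K j,
      Set.ncard_image_of_injective _ (Sym2.map.injective (iotaFun_injective hnm))]
  rw [hcard_eq]
  by_cases hcase : ∃ i₀ : Fin d, (edgesInDir H i₀).Nonempty ∧ f i₀ = Fin.castLE hnm j
  · obtain ⟨i₀, hi₀ne, hfi₀⟩ := hcase
    have hset : edgesInDir K' (Fin.castLE hnm j) = Sym2.map Ψ '' edgesInDir H i₀ := by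
      apply Set.Subset.antisymm
      · intro e' he'
        induction e' using Sym2.ind with
        | _ x y =>
          rw [mem_edgesInDir, SimpleGraph.Subgraph.mem_edgeSet] at he'
          obtain ⟨i, hine, hfi, hmem⟩ := claim x y he'.1 he'.2
          have : i = i₀ := hfinj hine hi₀ne (by rw [hfi, hfi₀])
          rwa [← this]
      · rintro e' ⟨e, he, rfl⟩
        induction e using Sym2.ind with
        | _ u₀ v₀ =>
          rw [mem_edgesInDir, SimpleGraph.Subgraph.mem_edgeSet] at he
          obtain ⟨hadj, hne⟩ := he
          have hu₀ : u₀ ∈ H.verts := H.edge_vert hadj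
          have hv₀ : v₀ ∈ H.verts := H.edge_vert hadj.symm
          set u : H.verts := ⟨u₀, hu₀⟩
          set v : H.verts := ⟨v₀, hv₀⟩
          have huv : H.coe.Adj u v := hadj
          have hK'adj : K'.coe.Adj (φ' u) (φ' v) := φ'.map_adj_iff.mpr huv
          have hd := hfdir u v huv i₀ hne
          rw [hfi₀] at hd
          rw [Sym2.map_pair_eq, hΨval u, hΨval v, mem_edgesInDir]
          exact ⟨SimpleGraph.Subgraph.mem_edgeSet.mpr hK'adj, hd⟩
    rw [hset, Set.ncard_image_of_injOn (sym2_injOn hΨinj edgesInDir_verts),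
      hdir i₀ hi₀ne]
  · have hset : edgesInDir K' (Fin.castLE hnm j) = ∅ := by
      rw [Set.eq_empty_iff_forall_notMem]
      intro e' he'
      induction e' using Sym2.ind with
      | _ x y =>
        rw [mem_edgesInDir, SimpleGraph.Subgraph.mem_edgeSet] at he'
        obtain ⟨i, hine, hfi, -⟩ := claim x y he'.1 he'.2
        exact hcase ⟨i, hine, hfi⟩
    rw [hset, Set.ncard_empty]
    exact dvd_zero c

lemma ncard_biUnion_eq {α ι : Type*} [Finite α] (s : Finset ι) (g : ι → Set α)
    (hdisj : (s : Set ι).PairwiseDisjoint g) :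
    (⋃ i ∈ s, g i).ncard = ∑ i ∈ s, (g i).ncard := by
  classical
  induction s using Finset.cons_induction with
  | empty => simp
  | cons a t hat ih =>
    rw [Finset.coe_cons] at hdisj
    have h1 : (⋃ i ∈ Finset.cons a t hat, g i) = g a ∪ ⋃ i ∈ t, g i := by
      simp [Set.biUnion_insert]
    rw [h1, Finset.sum_cons, ← ih (hdisj.subset (Set.subset_insert a t)),
      Set.ncard_union_eq ?_ (Set.toFinite _) (Set.toFinite _)]
    rw [Set.disjoint_iUnion₂_right]
    intro i hi
    exact hdisj (Set.mem_insert a t) (Set.mem_insert_of_mem _ hi)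
      (by rintro rfl; exact hat hi)



theorem stiff_odd_directions_unpackable (d : ℕ) (hd : 1 ≤ d)
    (H : (cube d).Subgraph) (hne : H.edgeSet.Nonempty) (hstiff : Stiff H)
    (c : ℕ) (hodd : Odd c) (hc : 1 < c)
    (hdir : ∀ i : Fin d, (edgesInDir H i).Nonempty → (edgesInDir H i).ncard = c) :
    ∀ n : ℕ, 1 ≤ n → ¬ HasPerfectEdgePacking (cube n) H.coe := by
  intro n hn hpack
  obtain ⟨P, hiso, hdisjP, hcover⟩ := hpack
  set j₀ : Fin n := ⟨0, hn⟩ with hj₀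
  have hdvd : ∀ K ∈ P, c ∣ (edgesInDir K j₀).ncard := by
    intro K hK
    exact copy_dvd H hstiff c hdir K (hiso K hK).some j₀
  set P' : Set ((cube n).Subgraph) := {K ∈ P | (edgesInDir K j₀).Nonempty} with hP'
  have hsub : ∀ K : (cube n).Subgraph, edgesInDir K j₀ ⊆ K.edgeSet :=
    fun K e he => he.1
  have hP'fin : P'.Finite := by
    apply Set.Finite.of_finite_image (f := fun K => edgesInDir K j₀) (Set.toFinite _)
    intro K1 h1 K2 h2 heq
    by_contra hne12
    have hdisj : Disjoint K1.edgeSet K2.edgeSet := hdisjP h1.1 h2.1 hne12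
    have : Disjoint (edgesInDir K1 j₀) (edgesInDir K2 j₀) :=
      hdisj.mono (hsub K1) (hsub K2)
    rw [show edgesInDir K1 j₀ = edgesInDir K2 j₀ from heq] at this
    exact (h2.2).ne_empty (disjoint_self.mp this)
  have hunion : edgesInDir (⊤ : (cube n).Subgraph) j₀ = ⋃ K ∈ P', edgesInDir K j₀ := by
    apply Set.Subset.antisymm
    · rintro e ⟨hetop, hdir'⟩
      have he : e ∈ (cube n).edgeSet := by
        rw [← SimpleGraph.Subgraph.edgeSet_top]
        exact hetop
      rw [← hcover] at he
      simp only [Set.mem_iUnion] at he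
      obtain ⟨K, hK, heK⟩ := he
      have hmem : e ∈ edgesInDir K j₀ := ⟨heK, hdir'⟩
      refine Set.mem_biUnion ?_ hmem
      exact ⟨hK, ⟨e, hmem⟩⟩
    · refine Set.iUnion₂_subset fun K hK => ?_
      rintro e ⟨heK, hdir'⟩
      refine ⟨?_, hdir'⟩
      rw [SimpleGraph.Subgraph.edgeSet_top]
      have : e ∈ (cube n).edgeSet := by
        rw [← hcover]
        exact Set.mem_biUnion hK.1 heK
      exact this
  have hfinset : edgesInDir (⊤ : (cube n).Subgraph) j₀
      = ⋃ K ∈ hP'fin.toFinset, edgesInDir K j₀ := by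
    rw [hunion]
    congr 1
    ext K
    simp [Set.Finite.mem_toFinset]
  have hdisj' : (↑hP'fin.toFinset : Set ((cube n).Subgraph)).PairwiseDisjoint
      (fun K => edgesInDir K j₀) := by
    intro K1 h1 K2 h2 hne12
    rw [Set.Finite.coe_toFinset] at h1 h2
    exact (hdisjP h1.1 h2.1 hne12).mono (hsub K1) (hsub K2)
  have hcardsum := ncard_biUnion_eq hP'fin.toFinset (fun K => edgesInDir K j₀) hdisj'
  have hdvdtot : c ∣ (edgesInDir (⊤ : (cube n).Subgraph) j₀).ncard := by
    rw [hfinset, hcardsum]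
    refine Finset.dvd_sum fun K hK => ?_
    rw [Set.Finite.mem_toFinset] at hK
    exact hdvd K hK.1
  rw [card_dir_top hn j₀] at hdvdtot
  have hcop : Nat.Coprime c 2 := hodd.coprime_two_right
  have := Nat.Coprime.eq_one_of_dvd (hcop.pow_right (n - 1)) hdvdtot
  omega
end
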